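/- Let n ≥ 1, m ≥ 1 with m < n, and m/2 < α < n/2. Iterating the codimension-one trace inequality m times yields: for F : ℝⁿ → ℂ with ∫|F(k)|²(2π|k|)^{2α} dk < ∞, writing k = (k₁,k₂) ∈ ℝ^{n−m} × ℝ^m and G(k₁) := ∫_{ℝ^m} F(k₁,k₂) dk₂, one has ∫_{ℝ^{n−m}} |G(k₁)|² (2π|k₁|)^{2α−m} dk₁ ≤ (1/(2^m π^{m/2})) · (Γ(α − m/2)/Γ(α)) · ∫_{ℝⁿ} |F(k)|² (2π|k|)^{2α} dk. -/

import Mathlib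

open MeasureTheory Real Set
open scoped ENNReal

namespace TraceAux

/-- integrability of the Gamma-type kernel with rate `r`. -/
lemma integrableOn_gamma_kernel {α r : ℝ} (hα : 0 < α) (hr : 0 < r) :
    IntegrableOn (fun t : ℝ => t ^ (α - 1) * Real.exp (-(r * t))) (Ioi 0) := by
  have h := integrableOn_rpow_mul_exp_neg_mul_rpow
    (by linarith : (-1 : ℝ) < α - 1) (p := 1) zero_lt_one hr
  refine h.congr_fun (fun t ht => ?_) measurableSet_Ioi
  simp [Real.rpow_one, neg_mul]

/-- Gamma representation of negative powers. -/
lemma gamma_repr {α r : ℝ} (hα : 0 < α) (hr : 0 < r) :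
    r ^ (-α) = (Real.Gamma α)⁻¹ *
      ∫ t in Ioi (0 : ℝ), t ^ (α - 1) * Real.exp (-(r * t)) := by
  rw [Real.integral_rpow_mul_exp_neg_mul_Ioi hα hr]
  have hΓ : Real.Gamma α ≠ 0 := (Real.Gamma_pos_of_pos hα).ne'
  rw [Real.rpow_neg hr.le]
  rw [div_rpow (by norm_num : (0:ℝ) ≤ 1) hr.le, Real.one_rpow]
  field_simp

/-- Gaussian integrability on Euclidean space. -/
lemma integrable_gauss (q : ℕ) {t : ℝ} (ht : 0 < t) :
    Integrable (fun v : EuclideanSpace ℝ (Fin q) => Real.exp (-(t * ‖v‖ ^ 2))) := by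
  have h := (GaussianFourier.integrable_cexp_neg_mul_sq_norm_add
    (b := (t : ℂ)) (by simpa using ht) 0 (0 : EuclideanSpace ℝ (Fin q))).norm
  refine h.congr (Filter.Eventually.of_forall fun v => ?_)
  simp only [zero_mul, add_zero]
  rw [show -(t : ℂ) * (‖v‖ : ℂ) ^ 2 = ((-(t * ‖v‖ ^ 2) : ℝ) : ℂ) by push_cast; ring]
  rw [Complex.norm_exp, Complex.ofReal_re]

/-- Gaussian lintegral on Euclidean space. -/
lemma lintegral_gauss (q : ℕ) {t : ℝ} (ht : 0 < t) :
    ∫⁻ v : EuclideanSpace ℝ (Fin q), ENNReal.ofReal (Real.exp (-(t * ‖v‖ ^ 2))) =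
      ENNReal.ofReal ((π / t) ^ ((q : ℝ) / 2)) := by
  rw [← ofReal_integral_eq_lintegral_ofReal (integrable_gauss q ht)
    (Filter.Eventually.of_forall fun v => (Real.exp_pos _).le)]
  congr 1
  have := GaussianFourier.integral_rexp_neg_mul_sq_norm
    (V := EuclideanSpace ℝ (Fin q)) ht
  simp only [neg_mul] at this ⊢
  rw [this, finrank_euclideanSpace_fin]

/-- Key radial integral: `∫ (c + ‖y‖²)^(-α) dy` over `ℝ^q`. -/
lemma lintegral_radial (q : ℕ) {α c : ℝ} (hα : (q : ℝ) / 2 < α) (hc : 0 < c) :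
    ∫⁻ y : EuclideanSpace ℝ (Fin q), ENNReal.ofReal ((c + ‖y‖ ^ 2) ^ (-α)) =
      ENNReal.ofReal (π ^ ((q : ℝ) / 2) *
        (Real.Gamma (α - q / 2) / Real.Gamma α) * c ^ ((q : ℝ) / 2 - α)) := by
  have hq0 : (0 : ℝ) ≤ (q : ℝ) / 2 := by positivity
  have hα0 : 0 < α := lt_of_le_of_lt hq0 hα
  have hΓ : 0 < Real.Gamma α := Real.Gamma_pos_of_pos hα0
  -- rewrite the integrand via the Gamma representation
  have step1 : ∀ y : EuclideanSpace ℝ (Fin q),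
      ENNReal.ofReal ((c + ‖y‖ ^ 2) ^ (-α)) =
        ENNReal.ofReal (Real.Gamma α)⁻¹ *
          ∫⁻ t in Ioi (0 : ℝ),
            ENNReal.ofReal (t ^ (α - 1) * Real.exp (-((c + ‖y‖ ^ 2) * t))) := by
    intro y
    have hr : 0 < c + ‖y‖ ^ 2 := by positivity
    rw [gamma_repr hα0 hr, ENNReal.ofReal_mul (by positivity)]
    congr 1
    rw [← ofReal_integral_eq_lintegral_ofReal (integrableOn_gamma_kernel hα0 hr)
      ((ae_restrict_mem measurableSet_Ioi).mono fun t ht => by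
        have : (0 : ℝ) < t := ht
        positivity)]
  simp_rw [step1]
  rw [lintegral_const_mul' _ _ ENNReal.ofReal_ne_top]
  -- swap the integrals (Tonelli)
  have hmeas : AEMeasurable
      (Function.uncurry fun (y : EuclideanSpace ℝ (Fin q)) (t : ℝ) =>
        ENNReal.ofReal (t ^ (α - 1) * Real.exp (-((c + ‖y‖ ^ 2) * t))))
      ((volume : Measure (EuclideanSpace ℝ (Fin q))).prod
        (volume.restrict (Ioi (0 : ℝ)))) := by
    apply Measurable.aemeasurable
    show Measurable fun z : EuclideanSpace ℝ (Fin q) × ℝ =>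
      ENNReal.ofReal (z.2 ^ (α - 1) * Real.exp (-((c + ‖z.1‖ ^ 2) * z.2)))
    measurability
  rw [lintegral_lintegral_swap hmeas]
  -- compute the inner integral for each `t > 0`
  have step2 : ∀ t ∈ Ioi (0 : ℝ),
      (∫⁻ y : EuclideanSpace ℝ (Fin q),
          ENNReal.ofReal (t ^ (α - 1) * Real.exp (-((c + ‖y‖ ^ 2) * t)))) =
        ENNReal.ofReal (π ^ ((q : ℝ) / 2) *
          (t ^ (α - (q : ℝ) / 2 - 1) * Real.exp (-(c * t)))) := by
    intro t ht
    have ht' : (0 : ℝ) < t := ht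
    have hpt : ∀ y : EuclideanSpace ℝ (Fin q),
        t ^ (α - 1) * Real.exp (-((c + ‖y‖ ^ 2) * t)) =
          (t ^ (α - 1) * Real.exp (-(c * t))) * Real.exp (-(t * ‖y‖ ^ 2)) := by
      intro y
      rw [mul_assoc, ← Real.exp_add]
      ring_nf
    simp_rw [hpt]
    simp_rw [ENNReal.ofReal_mul (by positivity :
      (0:ℝ) ≤ t ^ (α - 1) * Real.exp (-(c * t)))]
    rw [lintegral_const_mul' _ _ ENNReal.ofReal_ne_top, lintegral_gauss q ht',
      ← ENNReal.ofReal_mul (by positivity)]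
    congr 1
    rw [Real.div_rpow pi_nonneg ht'.le]
    rw [div_eq_mul_inv, ← Real.rpow_neg ht'.le]
    have key : t ^ (α - 1) * t ^ (-((q : ℝ) / 2)) = t ^ (α - (q : ℝ) / 2 - 1) := by
      rw [← Real.rpow_add ht']
      ring_nf
    rw [← key]
    ring
  rw [setLIntegral_congr_fun measurableSet_Ioi
    step2]
  -- compute the outer integral
  have hα2 : 0 < α - (q : ℝ) / 2 := by linarith
  simp_rw [ENNReal.ofReal_mul (by positivity : (0:ℝ) ≤ π ^ ((q : ℝ) / 2))]
  rw [lintegral_const_mul' _ _ ENNReal.ofReal_ne_top]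
  have : (∫⁻ t in Ioi (0 : ℝ),
      ENNReal.ofReal (t ^ (α - (q : ℝ) / 2 - 1) * Real.exp (-(c * t)))) =
      ENNReal.ofReal ((1 / c) ^ (α - (q : ℝ) / 2) * Real.Gamma (α - (q : ℝ) / 2)) := by
    rw [← ofReal_integral_eq_lintegral_ofReal (integrableOn_gamma_kernel hα2 hc)
      ((ae_restrict_mem measurableSet_Ioi).mono fun t ht => by
        have : (0 : ℝ) < t := ht
        positivity)]
    rw [Real.integral_rpow_mul_exp_neg_mul_Ioi hα2 hc]
  rw [this, ← ENNReal.ofReal_mul (by positivity), ← ENNReal.ofReal_mul (by positivity)]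
  congr 1
  rw [one_div, Real.inv_rpow hc.le, ← Real.rpow_neg hc.le, neg_sub]
  field_simp

/-- Measurability of `rpow` with constant exponent. -/
lemma measurable_rpow_const {c : ℝ} : Measurable fun x : ℝ => x ^ c := by measurability

/-- The weight-inverse integral over a slice. -/
lemma lintegral_weight (q : ℕ) {α a : ℝ} (hα : (q : ℝ) / 2 < α) (ha : 0 < a) :
    ∫⁻ y : EuclideanSpace ℝ (Fin q),
        ENNReal.ofReal (((2 * π * Real.sqrt (a ^ 2 + ‖y‖ ^ 2)) ^ (2 * α))⁻¹) =
      ENNReal.ofReal ((2 * π) ^ (-(2 * α)) * (π ^ ((q : ℝ) / 2) *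
        (Real.Gamma (α - q / 2) / Real.Gamma α) * (a ^ 2) ^ ((q : ℝ) / 2 - α))) := by
  have h2π : (0 : ℝ) < 2 * π := by positivity
  have hpt : ∀ y : EuclideanSpace ℝ (Fin q),
      (((2 * π * Real.sqrt (a ^ 2 + ‖y‖ ^ 2)) ^ (2 * α))⁻¹ : ℝ) =
        (2 * π) ^ (-(2 * α)) * ((a ^ 2 + ‖y‖ ^ 2) ^ (-α)) := by
    intro y
    have hr : (0 : ℝ) < a ^ 2 + ‖y‖ ^ 2 := by positivity
    rw [Real.mul_rpow h2π.le (Real.sqrt_nonneg _), Real.rpow_neg h2π.le,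
      Real.rpow_neg hr.le, ← mul_inv]
    congr 2
    rw [Real.sqrt_eq_rpow, ← Real.rpow_mul hr.le]
    congr 1
    ring
  simp_rw [hpt, ENNReal.ofReal_mul (by positivity : (0:ℝ) ≤ (2 * π) ^ (-(2 * α)))]
  rw [lintegral_const_mul' _ _ ENNReal.ofReal_ne_top,
    lintegral_radial q hα (by positivity : (0:ℝ) < a ^ 2),
    ← ENNReal.ofReal_mul (by positivity)]

/-- Cauchy-Schwarz bound for a slice. -/
lemma slice_bound {q : ℕ} (f : EuclideanSpace ℝ (Fin q) → ℂ) (hf : Measurable f)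
    (v : EuclideanSpace ℝ (Fin q) → ℝ) (hv : Measurable v) (hvpos : ∀ y, 0 < v y) :
    ENNReal.ofReal (‖∫ y, f y‖ ^ 2) ≤
      (∫⁻ y, ENNReal.ofReal (‖f y‖ ^ 2 * (v y) ^ 2)) *
        ∫⁻ y, ENNReal.ofReal (((v y) ^ 2)⁻¹) := by
  have h1 : ENNReal.ofReal (‖∫ y, f y‖ ^ 2) = (‖∫ y, f y‖₊ : ℝ≥0∞) ^ 2 := by
    rw [ENNReal.ofReal_pow (norm_nonneg _), ofReal_norm, enorm_eq_nnnorm]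
  have h3 : ∀ y, (‖f y‖₊ : ℝ≥0∞) =
      ENNReal.ofReal (‖f y‖ * v y) * ENNReal.ofReal ((v y)⁻¹) := by
    intro y
    rw [← ENNReal.ofReal_mul (mul_nonneg (norm_nonneg _) (hvpos y).le), mul_assoc,
      mul_inv_cancel₀ (hvpos y).ne', mul_one, ofReal_norm, enorm_eq_nnnorm]
  have hf1 : AEMeasurable (fun y => ENNReal.ofReal (‖f y‖ * v y)) volume :=
    ((hf.norm.mul hv).ennreal_ofReal).aemeasurable
  have hg1 : AEMeasurable (fun y => ENNReal.ofReal ((v y)⁻¹)) volume :=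
    ((hv.inv).ennreal_ofReal).aemeasurable
  have holder := ENNReal.lintegral_mul_le_Lp_mul_Lq volume
    Real.HolderConjugate.two_two hf1 hg1
  rw [h1]
  calc (‖∫ y, f y‖₊ : ℝ≥0∞) ^ 2
      ≤ (∫⁻ y, (‖f y‖₊ : ℝ≥0∞)) ^ 2 := by
        gcongr
        exact enorm_integral_le_lintegral_enorm f
    _ = (∫⁻ y, ENNReal.ofReal (‖f y‖ * v y) * ENNReal.ofReal ((v y)⁻¹)) ^ 2 := by
        simp_rw [h3]
    _ ≤ ((∫⁻ y, ENNReal.ofReal (‖f y‖ * v y) ^ (2:ℝ)) ^ (1/(2:ℝ)) *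
          (∫⁻ y, ENNReal.ofReal ((v y)⁻¹) ^ (2:ℝ)) ^ (1/(2:ℝ))) ^ 2 := by
        gcongr
        exact holder
    _ = (∫⁻ y, ENNReal.ofReal (‖f y‖ * v y) ^ (2:ℝ)) *
          (∫⁻ y, ENNReal.ofReal ((v y)⁻¹) ^ (2:ℝ)) := by
        rw [mul_pow, ← ENNReal.rpow_natCast (_ ^ (1/(2:ℝ))) 2,
          ← ENNReal.rpow_natCast (_ ^ (1/(2:ℝ))) 2,
          ← ENNReal.rpow_mul, ← ENNReal.rpow_mul]
        norm_num
    _ = (∫⁻ y, ENNReal.ofReal (‖f y‖ ^ 2 * (v y) ^ 2)) *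
          ∫⁻ y, ENNReal.ofReal (((v y) ^ 2)⁻¹) := by
        congr 1
        · refine lintegral_congr fun y => ?_
          rw [show (2:ℝ) = ((2:ℕ):ℝ) by norm_num, ENNReal.rpow_natCast,
            ← ENNReal.ofReal_pow (mul_nonneg (norm_nonneg _) (hvpos y).le), mul_pow]
        · refine lintegral_congr fun y => ?_
          rw [show (2:ℝ) = ((2:ℕ):ℝ) by norm_num, ENNReal.rpow_natCast,
            ← ENNReal.ofReal_pow (inv_nonneg.mpr (hvpos y).le), inv_pow]

end TraceAux

open TraceAux

set_option maxHeartbeats 1000000 in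
/-- Fourier-side codimension-`q` trace inequality, obtained by iterating the
codimension-one inequality (here `n = p + q` is the total dimension, `q = m`
the codimension). -/
theorem fourier_trace_inequality_codim (p q : ℕ) (hp : 1 ≤ p) (hq : 1 ≤ q) (α : ℝ)
    (hα1 : (q : ℝ)/2 < α) (hα2 : α < ((p : ℝ) + q)/2)
    (F : EuclideanSpace ℝ (Fin p) × EuclideanSpace ℝ (Fin q) → ℂ) (hF : Measurable F)
    (hint : Integrable (fun k : EuclideanSpace ℝ (Fin p) × EuclideanSpace ℝ (Fin q) =>
      ‖F k‖ ^ 2 * (2 * π * Real.sqrt (‖k.1‖ ^ 2 + ‖k.2‖ ^ 2)) ^ (2 * α))) :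
    ∫ k₁ : EuclideanSpace ℝ (Fin p),
        ‖∫ k₂ : EuclideanSpace ℝ (Fin q), F (k₁, k₂)‖ ^ 2 * (2 * π * ‖k₁‖) ^ (2 * α - q) ≤
      (1 / (2 ^ q * π ^ ((q : ℝ)/2))) * (Real.Gamma (α - q/2) / Real.Gamma α) *
        ∫ k : EuclideanSpace ℝ (Fin p) × EuclideanSpace ℝ (Fin q),
          ‖F k‖ ^ 2 * (2 * π * Real.sqrt (‖k.1‖ ^ 2 + ‖k.2‖ ^ 2)) ^ (2 * α) := by
  classical
  have h2π : (0 : ℝ) < 2 * π := by positivity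
  have hα0 : (0 : ℝ) < α := lt_of_le_of_lt (by positivity) hα1
  have hΓq : 0 < Real.Gamma (α - q / 2) := Real.Gamma_pos_of_pos (by linarith)
  have hΓα : 0 < Real.Gamma α := Real.Gamma_pos_of_pos hα0
  let P := EuclideanSpace ℝ (Fin p)
  let Q := EuclideanSpace ℝ (Fin q)
  set C : ℝ := (1 / (2 ^ q * π ^ ((q : ℝ)/2))) * (Real.Gamma (α - q/2) / Real.Gamma α)
    with hC
  have hC0 : 0 ≤ C := by positivity
  set I : ℝ := ∫ k : P × Q,
      ‖F k‖ ^ 2 * (2 * π * Real.sqrt (‖k.1‖ ^ 2 + ‖k.2‖ ^ 2)) ^ (2 * α) with hI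
  have hI0 : 0 ≤ I := integral_nonneg fun k => by positivity
  have hGsm : StronglyMeasurable (fun k₁ : P => ∫ k₂ : Q, F (k₁, k₂)) :=
    StronglyMeasurable.integral_prod_right' (ν := (volume : Measure Q))
      hF.stronglyMeasurable
  haveI : Nontrivial P := by
    have hfr : 0 < Module.finrank ℝ (EuclideanSpace ℝ (Fin p)) := by
      rw [finrank_euclideanSpace_fin]; exact hp
    exact Module.nontrivial_of_finrank_pos hfr
  have hne : ∀ᵐ k₁ : P, k₁ ≠ (0 : P) := by
    have h0 : {k₁ : P | ¬ k₁ ≠ 0} = {(0 : P)} := by ext k; simp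
    rw [ae_iff, h0]
    exact measure_singleton 0
  -- pointwise slice bound
  have hslice : ∀ᵐ k₁ : P,
      ENNReal.ofReal (‖∫ k₂ : Q, F (k₁, k₂)‖ ^ 2 * (2 * π * ‖k₁‖) ^ (2 * α - q)) ≤
        (∫⁻ k₂ : Q, ENNReal.ofReal (‖F (k₁, k₂)‖ ^ 2 *
          (2 * π * Real.sqrt (‖k₁‖ ^ 2 + ‖k₂‖ ^ 2)) ^ (2 * α))) * ENNReal.ofReal C := by
    filter_upwards [hne] with k₁ hk₁
    have hnk : 0 < ‖k₁‖ := norm_pos_iff.mpr hk₁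
    set v : Q → ℝ := fun y => (2 * π * Real.sqrt (‖k₁‖ ^ 2 + ‖y‖ ^ 2)) ^ α with hv
    have hvm : Measurable v :=
      measurable_rpow_const.comp (measurable_const.mul
        ((measurable_const.add (measurable_norm.pow_const 2)).sqrt))
    have hvpos : ∀ y, 0 < v y := fun y =>
      Real.rpow_pos_of_pos (mul_pos h2π (Real.sqrt_pos.mpr (by positivity))) _
    have hv2 : ∀ y : Q, (v y) ^ 2 =
        (2 * π * Real.sqrt (‖k₁‖ ^ 2 + ‖y‖ ^ 2)) ^ (2 * α) := by
      intro y
      rw [hv]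
      rw [show (2:ℝ) * α = α * ((2:ℕ):ℝ) by push_cast; ring,
        Real.rpow_mul (by positivity), Real.rpow_natCast]
    have hsb := slice_bound (fun y => F (k₁, y)) (hF.comp measurable_prodMk_left) v hvm hvpos
    have hw := lintegral_weight q hα1 hnk
    have hconst : (2 * π) ^ (-(2 * α)) * (π ^ ((q : ℝ) / 2) *
        (Real.Gamma (α - q / 2) / Real.Gamma α) * ((‖k₁‖ ^ 2) ^ ((q : ℝ) / 2 - α))) *
        (2 * π * ‖k₁‖) ^ (2 * α - (q : ℝ)) = C := by
      have e1 : (2 * π * ‖k₁‖) ^ (2 * α - (q:ℝ)) =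
          (2 * π) ^ (2 * α - (q:ℝ)) * ‖k₁‖ ^ (2 * α - (q:ℝ)) :=
        Real.mul_rpow h2π.le (norm_nonneg _)
      have e2 : ((‖k₁‖ ^ 2 : ℝ)) ^ ((q:ℝ)/2 - α) = ‖k₁‖ ^ ((q:ℝ) - 2 * α) := by
        rw [← Real.rpow_natCast ‖k₁‖ 2, ← Real.rpow_mul (norm_nonneg _)]
        congr 1; push_cast; ring
      have e3 : ‖k₁‖ ^ ((q:ℝ) - 2 * α) * ‖k₁‖ ^ (2 * α - (q:ℝ)) = 1 := by
        rw [← Real.rpow_add hnk]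
        norm_num
      have e4 : (2 * π) ^ (-(2 * α)) * (2 * π) ^ (2 * α - (q:ℝ)) = (2 * π) ^ (-(q:ℝ)) := by
        rw [← Real.rpow_add h2π]; congr 1; ring
      have hπq : π ^ ((q:ℝ)/2) * π ^ ((q:ℝ)/2) = π ^ (q : ℕ) := by
        rw [← Real.rpow_add pi_pos, ← Real.rpow_natCast π q]
        congr 1; push_cast; ring
      calc (2 * π) ^ (-(2 * α)) * (π ^ ((q : ℝ) / 2) *
            (Real.Gamma (α - q / 2) / Real.Gamma α) * ((‖k₁‖ ^ 2) ^ ((q : ℝ) / 2 - α))) *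
            (2 * π * ‖k₁‖) ^ (2 * α - (q : ℝ))
          = ((2 * π) ^ (-(2 * α)) * (2 * π) ^ (2 * α - (q:ℝ))) *
            (‖k₁‖ ^ ((q:ℝ) - 2 * α) * ‖k₁‖ ^ (2 * α - (q:ℝ))) *
            (π ^ ((q : ℝ) / 2) * (Real.Gamma (α - q / 2) / Real.Gamma α)) := by
            rw [e1, e2]; ring
        _ = (2 * π) ^ (-(q:ℝ)) * (π ^ ((q : ℝ) / 2) *
            (Real.Gamma (α - q / 2) / Real.Gamma α)) := by rw [e3, e4]; ring
        _ = C := by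
            have hπ2 : (0:ℝ) < π ^ ((q:ℝ)/2) := Real.rpow_pos_of_pos pi_pos _
            rw [Real.rpow_neg h2π.le, Real.rpow_natCast (2 * π) q, mul_pow, ← hπq, hC]
            field_simp
    calc ENNReal.ofReal (‖∫ k₂ : Q, F (k₁, k₂)‖ ^ 2 * (2 * π * ‖k₁‖) ^ (2 * α - (q:ℝ)))
        = ENNReal.ofReal (‖∫ k₂ : Q, F (k₁, k₂)‖ ^ 2) *
            ENNReal.ofReal ((2 * π * ‖k₁‖) ^ (2 * α - (q:ℝ))) :=
          ENNReal.ofReal_mul (by positivity)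
      _ ≤ ((∫⁻ k₂ : Q, ENNReal.ofReal (‖F (k₁, k₂)‖ ^ 2 * (v k₂) ^ 2)) *
            (∫⁻ k₂ : Q, ENNReal.ofReal (((v k₂) ^ 2)⁻¹))) *
            ENNReal.ofReal ((2 * π * ‖k₁‖) ^ (2 * α - (q:ℝ))) := by
          gcongr
      _ = (∫⁻ k₂ : Q, ENNReal.ofReal (‖F (k₁, k₂)‖ ^ 2 *
            (2 * π * Real.sqrt (‖k₁‖ ^ 2 + ‖k₂‖ ^ 2)) ^ (2 * α))) *
            (ENNReal.ofReal ((2 * π) ^ (-(2 * α)) * (π ^ ((q : ℝ) / 2) *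
              (Real.Gamma (α - q / 2) / Real.Gamma α) * ((‖k₁‖ ^ 2) ^ ((q : ℝ) / 2 - α)))) *
              ENNReal.ofReal ((2 * π * ‖k₁‖) ^ (2 * α - (q:ℝ)))) := by
          simp_rw [hv2]
          rw [hw]
          ring
      _ = _ := by
          rw [← ENNReal.ofReal_mul (by positivity), hconst]
  -- measurability
  have hLme : Measurable (fun k₁ : P =>
      ‖∫ k₂ : Q, F (k₁, k₂)‖ ^ 2 * (2 * π * ‖k₁‖) ^ (2 * α - (q:ℝ))) :=
    (hGsm.measurable.norm.pow_const 2).mul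
      (measurable_rpow_const.comp (measurable_const.mul measurable_norm))
  have hprodme : AEMeasurable (fun k : P × Q => ENNReal.ofReal (‖F k‖ ^ 2 *
      (2 * π * Real.sqrt (‖k.1‖ ^ 2 + ‖k.2‖ ^ 2)) ^ (2 * α)))
      ((volume : Measure P).prod (volume : Measure Q)) :=
    (((hF.norm.pow_const 2).mul (measurable_rpow_const.comp (measurable_const.mul
      (((measurable_fst.norm.pow_const 2).add
        (measurable_snd.norm.pow_const 2)).sqrt)))).ennreal_ofReal).aemeasurable
  have hkey : (∫⁻ k₁ : P, ENNReal.ofReal (‖∫ k₂ : Q, F (k₁, k₂)‖ ^ 2 *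
      (2 * π * ‖k₁‖) ^ (2 * α - (q:ℝ)))) ≤ ENNReal.ofReal C * ENNReal.ofReal I := by
    calc (∫⁻ k₁ : P, ENNReal.ofReal (‖∫ k₂ : Q, F (k₁, k₂)‖ ^ 2 *
          (2 * π * ‖k₁‖) ^ (2 * α - (q:ℝ))))
        ≤ ∫⁻ k₁ : P, (∫⁻ k₂ : Q, ENNReal.ofReal (‖F (k₁, k₂)‖ ^ 2 *
            (2 * π * Real.sqrt (‖k₁‖ ^ 2 + ‖k₂‖ ^ 2)) ^ (2 * α))) * ENNReal.ofReal C :=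
          lintegral_mono_ae hslice
      _ = (∫⁻ k₁ : P, ∫⁻ k₂ : Q, ENNReal.ofReal (‖F (k₁, k₂)‖ ^ 2 *
            (2 * π * Real.sqrt (‖k₁‖ ^ 2 + ‖k₂‖ ^ 2)) ^ (2 * α))) * ENNReal.ofReal C :=
          lintegral_mul_const' _ _ ENNReal.ofReal_ne_top
      _ = (∫⁻ k : P × Q, ENNReal.ofReal (‖F k‖ ^ 2 *
            (2 * π * Real.sqrt (‖k.1‖ ^ 2 + ‖k.2‖ ^ 2)) ^ (2 * α))) * ENNReal.ofReal C := by
          congr 1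
          exact (lintegral_prod _ hprodme).symm
      _ = ENNReal.ofReal I * ENNReal.ofReal C := by
          rw [hI, ofReal_integral_eq_lintegral_ofReal hint
            (Filter.Eventually.of_forall fun k => by positivity)]
      _ = ENNReal.ofReal C * ENNReal.ofReal I := mul_comm _ _
  rw [integral_eq_lintegral_of_nonneg_ae
    (Filter.Eventually.of_forall fun k₁ => by positivity) hLme.aestronglyMeasurable]
  refine le_trans (ENNReal.toReal_mono ?_ hkey) ?_
  · exact ENNReal.mul_ne_top ENNReal.ofReal_ne_top ENNReal.ofReal_ne_top
  · rw [← ENNReal.ofReal_mul hC0, ENNReal.toReal_ofReal (mul_nonneg hC0 hI0)]
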